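/- With P defined as above for integer q ≥ 4: P(x) > 0 for every proper coloring x ∈ {1,…,q}^n (n ≥ 0). -/

import Mathlib

open Polynomial Polynomial.Chebyshev

/-- `C n = T_{|n|}(√q/2)`; Mathlib's `T` is even in its integer index. -/
noncomputable def C (q : ℝ) (n : ℤ) : ℝ := (T ℝ n).eval (Real.sqrt q / 2)

/-- `D n = √q · U_{n-1}(√q/2)`, the odd extension (`D 0 = 0`). -/
noncomputable def D (q : ℝ) (n : ℤ) : ℝ := Real.sqrt q * (U ℝ (n - 1)).eval (Real.sqrt q / 2)

/-- A word is a proper coloring if no two consecutive letters are equal. -/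
def Proper {q : ℕ} (x : List (Fin q)) : Prop := x.Chain' (· ≠ ·)

instance {q : ℕ} (x : List (Fin q)) : Decidable (Proper x) := by
  unfold Proper List.Chain'; infer_instance

/-- The recursively defined cylinder measure: `P [] = 1`, `P x = 0` for non-proper `x`,
and `P x = (1/D(n+1)) ∑_{i=1}^n C(n-2i+1) P(x̂ᵢ)` for proper `x` of length `n`,
where `x̂ᵢ` deletes the `i`-th letter (here indexed from `0`, so the coefficient of
`x.eraseIdx i` is `C(n - 2(i+1) + 1) = C(n - 2i - 1)`). -/
noncomputable def P (q : ℕ) : List (Fin q) → ℝ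
  | [] => 1
  | a :: l =>
    if Proper (a :: l) then
      (1 / D q (((a :: l).length : ℤ) + 1)) *
        ∑ i : Fin (a :: l).length,
          C q (((a :: l).length : ℤ) - 2 * (i : ℤ) - 1) * P q ((a :: l).eraseIdx i)
    else 0
termination_by x => x.length
decreasing_by
  have := i.isLt
  simp only [List.length_eraseIdx, this, if_pos]
  omega

lemma T_pair (t : ℝ) (ht : 1 ≤ t) (n : ℕ) :
    1 ≤ (T ℝ n).eval t ∧ (T ℝ n).eval t ≤ (T ℝ (n+1)).eval t := by
  induction n with
  | zero => simp [T_zero, T_one]; linarith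
  | succ k ih =>
    obtain ⟨h1, h2⟩ := ih
    have hr := T_add_two ℝ k
    have : (T ℝ ((k:ℤ)+1+1)).eval t = 2*t*(T ℝ ((k:ℤ)+1)).eval t - (T ℝ (k:ℤ)).eval t := by
      rw [show ((k:ℤ)+1+1) = (k:ℤ)+2 by ring, hr]; simp
    constructor
    · push_cast; linarith
    · push_cast at this ⊢
      rw [this]; nlinarith

lemma U_pair (t : ℝ) (ht : 1 ≤ t) (n : ℕ) :
    1 ≤ (U ℝ n).eval t ∧ (U ℝ n).eval t ≤ (U ℝ (n+1)).eval t := by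
  induction n with
  | zero => simp [U_zero, U_one]; linarith
  | succ k ih =>
    obtain ⟨h1, h2⟩ := ih
    have hr : (U ℝ ((k:ℤ)+1+1)).eval t = 2*t*(U ℝ ((k:ℤ)+1)).eval t - (U ℝ (k:ℤ)).eval t := by
      rw [show ((k:ℤ)+1+1) = (k:ℤ)+2 by ring, U_add_two]; simp
    constructor
    · push_cast; linarith
    · push_cast at hr ⊢
      rw [hr]; nlinarith

lemma T_pos' (t : ℝ) (ht : 1 ≤ t) (n : ℤ) : 0 < (T ℝ n).eval t := by
  rcases Int.natAbs_eq n with h | h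
  · rw [h]; linarith [(T_pair t ht n.natAbs).1]
  · rw [h, T_neg]; linarith [(T_pair t ht n.natAbs).1]

lemma sqrt_ge_two {q : ℕ} (hq : 4 ≤ q) : 2 ≤ Real.sqrt q := by
  rw [show (2:ℝ) = Real.sqrt 4 by
    rw [show (4:ℝ) = 2^2 by norm_num, Real.sqrt_sq (by norm_num)]]
  exact Real.sqrt_le_sqrt (by exact_mod_cast hq)

lemma C_pos {q : ℕ} (hq : 4 ≤ q) (n : ℤ) : 0 < C q n := by
  have h2 : (1:ℝ) ≤ Real.sqrt q / 2 := by linarith [sqrt_ge_two hq]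
  exact T_pos' _ h2 n

lemma D_pos {q : ℕ} (hq : 4 ≤ q) (n : ℕ) : 0 < D q ((n:ℤ) + 1) := by
  have h2 : (1:ℝ) ≤ Real.sqrt q / 2 := by linarith [sqrt_ge_two hq]
  have hU : 0 < (U ℝ ((n:ℤ) + 1 - 1)).eval (Real.sqrt q / 2) := by
    rw [show (n:ℤ) + 1 - 1 = (n:ℤ) by ring]
    linarith [(U_pair _ h2 n).1]
  have hs : (0:ℝ) < Real.sqrt q := by linarith [sqrt_ge_two hq]
  exact mul_pos hs hU

lemma P_main (q : ℕ) (hq : 4 ≤ q) :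
    ∀ n (x : List (Fin q)), x.length ≤ n → 0 ≤ P q x ∧ (Proper x → 0 < P q x) := by
  intro n
  induction n with
  | zero =>
    intro x hx
    rw [List.length_eq_zero_iff.mp (Nat.le_zero.mp hx)]
    simp [P]
  | succ n ih =>
    intro x hx
    match x with
    | [] => simp [P]
    | a :: l =>
      by_cases hp : Proper (a :: l)
      · have hlen : l.length ≤ n := by simpa using hx
        have hD := D_pos hq (a :: l).length
        have hterm : ∀ i : Fin (a :: l).length,
            0 ≤ C q (((a :: l).length : ℤ) - 2 * (i : ℤ) - 1) * P q ((a :: l).eraseIdx i) := by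
          intro i
          have hle : ((a :: l).eraseIdx i).length ≤ n := by
            have := i.isLt
            rw [List.length_eraseIdx]
            simp only [this, if_pos]
            simp only [List.length_cons] at this ⊢
            omega
          exact mul_nonneg (C_pos hq _).le ((ih _ hle).1)
        have hpos : 0 < ∑ i : Fin (a :: l).length,
            C q (((a :: l).length : ℤ) - 2 * (i : ℤ) - 1) * P q ((a :: l).eraseIdx i) := by
          apply Finset.sum_pos' (fun i _ => hterm i)
          refine ⟨⟨l.length, by simp⟩, Finset.mem_univ _, ?_⟩
          have herase : (a :: l).eraseIdx l.length = (a :: l).dropLast := by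
            exact (List.dropLast_eq_eraseIdx (i := l.length) (by simp)).symm
          have hproper : Proper ((a :: l).eraseIdx l.length) := by
            rw [herase]; exact hp.dropLast
          have hle : ((a :: l).eraseIdx l.length).length ≤ n := by
            rw [herase]; simp; omega
          exact mul_pos (C_pos hq _) ((ih _ hle).2 hproper)
        have : 0 < P q (a :: l) := by
          rw [P, if_pos hp]
          exact mul_pos (by positivity) hpos
        exact ⟨this.le, fun _ => this⟩
      · rw [P, if_neg hp]
        exact ⟨le_rfl, fun h => absurd h hp⟩

theorem P_pos (q : ℕ) (hq : 4 ≤ q) (x : List (Fin q)) (hx : Proper x) : 0 < P q x := by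
  exact (P_main q hq x.length x le_rfl).2 hx
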